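/- For every d, D ∈ ℕ there exists c > 0 such that: for every polynomial q in d real variables of degree ≤ D and every cube Q ⊆ ℝ^d, there is a subcube Q' ⊆ Q of side length c·ℓ_Q with sup_{x∈Q'} |q(x)| ≤ 2·inf_{x∈Q'} |q(x)|. -/

import Mathlib

open MvPolynomial

/-- The axis-parallel cube in `ℝ^d` with lower corner `x` and side length `ℓ`. -/
def Cube {d : ℕ} (x : Fin d → ℝ) (ℓ : ℝ) : Set (Fin d → ℝ) :=
  {y | ∀ i, y i ∈ Set.Icc (x i) (x i + ℓ)}

lemma cube_zero_one_mem {d : ℕ} {y : Fin d → ℝ} :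
    y ∈ Cube (0 : Fin d → ℝ) 1 ↔ ∀ i, y i ∈ Set.Icc (0:ℝ) 1 := by
  simp [Cube]

/-- A multivariate polynomial vanishing on the unit cube is zero. -/
lemma eq_zero_of_vanish_cube : ∀ {d : ℕ} (q : MvPolynomial (Fin d) ℝ),
    (∀ y ∈ Cube (0 : Fin d → ℝ) 1, eval y q = 0) → q = 0 := by
  intro d
  induction d with
  | zero =>
    intro q hq
    obtain ⟨a, rfl⟩ := C_surjective (Fin 0) q
    have h0 : (fun i : Fin 0 => (0:ℝ)) ∈ Cube (0 : Fin 0 → ℝ) 1 := fun i => i.elim0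
    have := hq _ h0
    simp at this
    simp [this]
  | succ n ih =>
    intro q hq
    have key : ∀ s ∈ Cube (0 : Fin n → ℝ) 1,
        Polynomial.map (eval s) (finSuccEquiv ℝ n q) = 0 := by
      intro s hs
      apply Polynomial.eq_zero_of_infinite_isRoot
      apply Set.Infinite.mono (s := Set.Icc (0:ℝ) 1)
      · intro y hy
        simp only [Set.mem_setOf_eq, Polynomial.IsRoot]
        rw [← eval_eq_eval_mv_eval']
        apply hq
        intro i
        refine Fin.cases ?_ ?_ i
        · simpa using hy
        · intro j; simpa using hs j
      · exact Set.Icc_infinite (by norm_num)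
    have hcoeff : ∀ k, (finSuccEquiv ℝ n q).coeff k = 0 := by
      intro k
      apply ih
      intro s hs
      have := key s hs
      have h2 := congrArg (fun p => Polynomial.coeff p k) this
      simpa using h2
    have : finSuccEquiv ℝ n q = 0 := Polynomial.ext fun k => by simp [hcoeff k]
    exact (map_eq_zero_iff _ (AlgEquiv.injective _)).mp this

/-- Derivative of evaluation along one coordinate. -/
lemma hasDerivAt_eval_update {d : ℕ} (q : MvPolynomial (Fin d) ℝ) (k : Fin d)
    (z : Fin d → ℝ) (t : ℝ) :
    HasDerivAt (fun s => eval (Function.update z k s) q)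
      (eval (Function.update z k t) (pderiv k q)) t := by
  induction q using MvPolynomial.induction_on with
  | C a => simpa using hasDerivAt_const t (eval (Function.update z k t) (C a : MvPolynomial (Fin d) ℝ))
  | add p r hp hr =>
    simp only [map_add]; exact hp.add hr
  | mul_X p i hp =>
    by_cases h : i = k
    · subst h
      have := hp.mul (hasDerivAt_id t)
      simp only [map_mul, pderiv_mul, pderiv_X_self, map_add, eval_X, mul_one] at this ⊢
      convert this using 1
      · rfl
      · rfl
      · funext s; simp
      · simp [Function.update_self]
    · have := hp.mul_const (z i)
      simp only [map_mul, pderiv_mul, map_add, eval_X] at this ⊢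
      rw [pderiv_X_of_ne (Ne.symm (by exact fun hh => h hh.symm))]
      convert this using 1
      · rfl
      · rfl
      · funext s; simp [Function.update_of_ne h]
      · simp [Function.update_of_ne h]

/-- Mean value bound along one coordinate. -/
lemma mvt_coord {d : ℕ} (q : MvPolynomial (Fin d) ℝ) (k : Fin d) (w : Fin d → ℝ)
    {a b B : ℝ}
    (hbound : ∀ s ∈ Set.uIcc a b, |eval (Function.update w k s) (pderiv k q)| ≤ B) :
    |eval (Function.update w k b) q - eval (Function.update w k a) q| ≤ B * |b - a| := by
  have := Convex.norm_image_sub_le_of_norm_hasDerivWithin_le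
    (f := fun s => eval (Function.update w k s) q)
    (f' := fun s => eval (Function.update w k s) (pderiv k q))
    (s := Set.uIcc a b) (C := B)
    (fun s _ => (hasDerivAt_eval_update q k w s).hasDerivWithinAt)
    (fun s hs => by simpa using hbound s hs)
    (convex_uIcc a b) Set.left_mem_uIcc Set.right_mem_uIcc
  simpa using this

/-- Telescoping estimate: oscillation bound from pderiv bounds. -/
lemma telescope {d : ℕ} (q : MvPolynomial (Fin d) ℝ) {B c : ℝ} (hc : 0 ≤ c)
    (hB : ∀ i : Fin d, ∀ w ∈ Cube (0:Fin d→ℝ) 1, |eval w (pderiv i q)| ≤ B)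
    {z y : Fin d → ℝ} (hz : z ∈ Cube (0:Fin d→ℝ) 1) (hy : y ∈ Cube (0:Fin d→ℝ) 1)
    (hyz : ∀ i, |y i - z i| ≤ c) :
    |eval y q - eval z q| ≤ d * (B * c) := by
  have key : ∀ k, k ≤ d →
      |eval (fun i : Fin d => if (i:ℕ) < k then y i else z i) q - eval z q| ≤ k * (B * c) := by
    intro k
    induction k with
    | zero =>
      intro _
      have : (fun i : Fin d => if (i:ℕ) < 0 then y i else z i) = z := funext fun i => by simp
      simp [this]
    | succ k ih =>
      intro hk1
      have hk : k < d := hk1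
      have hkd : k ≤ d := hk.le
      set kk : Fin d := ⟨k, hk⟩ with hkk
      set w : Fin d → ℝ := fun i => if (i:ℕ) < k then y i else z i with hw
      have hwmem : ∀ i, w i ∈ Set.Icc (0:ℝ) 1 := by
        intro i
        by_cases h : (i:ℕ) < k <;> simp only [hw, h, if_true, if_false, reduceIte]
        · simpa using hy i
        · simpa using hz i
      have hwz : w = Function.update w kk (z kk) := by
        funext i
        by_cases h : i = kk
        · subst h; simp [hw, hkk]
        · rw [Function.update_of_ne h]
      have hw1 : (fun i : Fin d => if (i:ℕ) < k+1 then y i else z i)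
          = Function.update w kk (y kk) := by
        funext i
        by_cases h : i = kk
        · subst h; simp [hkk]
        · rw [Function.update_of_ne h]
          have h' : (i:ℕ) ≠ k := fun hh => h (Fin.ext hh)
          have : ((i:ℕ) < k+1) ↔ ((i:ℕ) < k) := by omega
          simp [hw, this]
      have hB0 : 0 ≤ B := le_trans (abs_nonneg _) (hB kk z hz)
      have step : |eval (Function.update w kk (y kk)) q
          - eval (Function.update w kk (z kk)) q| ≤ B * c := by
        have hb : ∀ s ∈ Set.uIcc (z kk) (y kk),
            |eval (Function.update w kk s) (pderiv kk q)| ≤ B := by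
          intro s hs
          apply hB kk
          intro i
          by_cases h : i = kk
          · subst h
            rw [Function.update_self]
            have hz' := hz kk; have hy' := hy kk
            simp only [Pi.zero_apply, Set.mem_Icc] at hz' hy' ⊢
            rcases Set.mem_uIcc.mp hs with ⟨h1, h2⟩ | ⟨h1, h2⟩ <;>
              constructor <;> linarith [hz'.1, hz'.2, hy'.1, hy'.2]
          · rw [Function.update_of_ne h]
            simpa using hwmem i
        calc |eval (Function.update w kk (y kk)) q - eval (Function.update w kk (z kk)) q|
            ≤ B * |y kk - z kk| := mvt_coord q kk w hb
          _ ≤ B * c := mul_le_mul_of_nonneg_left (hyz kk) hB0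
      have tri : |eval (fun i : Fin d => if (i:ℕ) < k+1 then y i else z i) q - eval z q|
          ≤ |eval (Function.update w kk (y kk)) q - eval (Function.update w kk (z kk)) q|
            + |eval w q - eval z q| := by
        rw [hw1]
        calc |eval (Function.update w kk (y kk)) q - eval z q|
            ≤ |eval (Function.update w kk (y kk)) q - eval w q| + |eval w q - eval z q| :=
              abs_sub_le _ _ _
          _ = _ := by rw [← hwz]
      have ihk := ih hkd
      push_cast
      calc |eval (fun i : Fin d => if (i:ℕ) < k+1 then y i else z i) q - eval z q|
          ≤ B * c + |eval w q - eval z q| := by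
            refine le_trans tri ?_; linarith [step]
        _ ≤ B * c + k * (B * c) := by linarith [ihk]
        _ = (k + 1 : ℝ) * (B * c) := by ring
  have := key d le_rfl
  have hyd : (fun i : Fin d => if (i:ℕ) < d then y i else z i) = y :=
    funext fun i => by simp [i.isLt]
  rwa [hyd] at this

/-- Uniform bound for partial derivatives in terms of sup on the unit cube. -/
lemma pderiv_sup_bound (d D : ℕ) :
    ∃ C : ℝ, 0 ≤ C ∧ ∀ q : MvPolynomial (Fin d) ℝ, q.totalDegree ≤ D →
      ∀ M : ℝ, (∀ y ∈ Cube (0:Fin d→ℝ) 1, |eval y q| ≤ M) →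
        ∀ i : Fin d, ∀ w ∈ Cube (0:Fin d→ℝ) 1, |eval w (pderiv i q)| ≤ C * M := by
  have hKeq : Cube (0 : Fin d → ℝ) 1 = Set.univ.pi fun _ : Fin d => Set.Icc (0:ℝ) 1 := by
    ext y
    constructor
    · intro h i _; simpa using h i
    · intro h i; simpa using h i (Set.mem_univ i)
  have hKc : IsCompact (Cube (0 : Fin d → ℝ) 1) := by
    rw [hKeq]; exact isCompact_univ_pi fun _ => isCompact_Icc
  haveI : CompactSpace (Cube (0 : Fin d → ℝ) 1) := isCompact_iff_compactSpace.mp hKc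
  set V := restrictTotalDegree (Fin d) ℝ D with hV
  let J : V →ₗ[ℝ] C(Cube (0 : Fin d → ℝ) 1, ℝ) :=
    { toFun := fun p => ⟨fun w => eval (w : Fin d → ℝ) (p : MvPolynomial (Fin d) ℝ),
        (MvPolynomial.continuous_eval _).comp continuous_subtype_val⟩
      map_add' := fun p r => by ext w; simp
      map_smul' := fun s p => by ext w; simp [smul_eval] }
  have hJinj : Function.Injective J := by
    intro p r h
    apply Subtype.ext
    have hvan : ∀ y ∈ Cube (0 : Fin d → ℝ) 1,
        eval y ((p : MvPolynomial (Fin d) ℝ) - (r : MvPolynomial (Fin d) ℝ)) = 0 := by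
      intro y hy
      have := congrArg (fun f => ContinuousMap.toFun f ⟨y, hy⟩) h
      simp only [J] at this
      simp only [map_sub]
      simpa using sub_eq_zero_of_eq this
    have := eq_zero_of_vanish_cube _ hvan
    exact sub_eq_zero.mp this
  letI : NormedAddCommGroup V := NormedAddCommGroup.induced V _ J hJinj
  letI : TopologicalSpace V := (NormedAddCommGroup.induced V _ J hJinj).toUniformSpace.toTopologicalSpace
  letI : NormedSpace ℝ V := NormedSpace.induced ℝ V _ J
  haveI : FiniteDimensional ℝ V := by
    rw [hV]; infer_instance
  let T : V →ₗ[ℝ] (Fin d → C(Cube (0 : Fin d → ℝ) 1, ℝ)) :=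
    { toFun := fun p => fun i =>
        ⟨fun w => eval (w : Fin d → ℝ) (pderiv i (p : MvPolynomial (Fin d) ℝ)),
          (MvPolynomial.continuous_eval _).comp continuous_subtype_val⟩
      map_add' := fun p r => by funext i; ext w; simp
      map_smul' := fun s p => by funext i; ext w; simp [smul_eval] }
  let T' := LinearMap.toContinuousLinearMap T
  refine ⟨‖T'‖, T'.opNorm_nonneg, ?_⟩
  intro q hq M hM i w hw
  have hM0 : 0 ≤ M := le_trans (abs_nonneg _) (hM 0 (fun i => by simp))
  set qV : V := ⟨q, (mem_restrictTotalDegree _ _ _).2 hq⟩ with hqV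
  have h1 : |eval w (pderiv i q)| ≤ ‖T qV i‖ := by
    have := (T qV i).norm_coe_le_norm ⟨w, hw⟩
    simpa [T] using this
  have h2 : ‖T qV i‖ ≤ ‖T qV‖ := norm_le_pi_norm (T qV) i
  have h3 : ‖T qV‖ ≤ ‖T'‖ * ‖qV‖ := by
    have : T' qV = T qV := rfl
    rw [← this]; exact T'.le_opNorm qV
  have h4 : ‖qV‖ ≤ M := by
    have : ‖qV‖ = ‖J qV‖ := rfl
    rw [this]
    rw [ContinuousMap.norm_le _ hM0]
    intro x
    simpa [J] using hM x x.2
  calc |eval w (pderiv i q)| ≤ ‖T'‖ * ‖qV‖ := le_trans h1 (le_trans h2 h3)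
    _ ≤ ‖T'‖ * M := mul_le_mul_of_nonneg_left h4 T'.opNorm_nonneg

/-- Main lemma on the unit cube. -/
lemma unit_cube_lemma (d D : ℕ) :
    ∃ c : ℝ, 0 < c ∧ c ≤ 1 ∧ ∀ q : MvPolynomial (Fin d) ℝ, q.totalDegree ≤ D →
      ∃ u : Fin d → ℝ, (∀ i, 0 ≤ u i ∧ u i + c ≤ 1) ∧
        ∃ M : ℝ, 0 ≤ M ∧ ∀ t ∈ Cube u c, M/2 ≤ |eval t q| ∧ |eval t q| ≤ M := by
  obtain ⟨C, hC0, hC⟩ := pderiv_sup_bound d D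
  have hden : (0:ℝ) < 1 + 2*d*C := by positivity
  set c : ℝ := 1/(1 + 2*d*C) with hc
  have hc0 : 0 < c := by positivity
  have hc1 : c ≤ 1 := by
    rw [hc, div_le_one hden]; nlinarith
  refine ⟨c, hc0, hc1, ?_⟩
  intro q hq
  have hKeq : Cube (0 : Fin d → ℝ) 1 = Set.univ.pi fun _ : Fin d => Set.Icc (0:ℝ) 1 := by
    ext y
    constructor
    · intro h i _; simpa using h i
    · intro h i; simpa using h i (Set.mem_univ i)
  have hKc : IsCompact (Cube (0 : Fin d → ℝ) 1) := by
    rw [hKeq]; exact isCompact_univ_pi fun _ => isCompact_Icc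
  have hKne : (Cube (0 : Fin d → ℝ) 1).Nonempty := ⟨0, fun i => by simp⟩
  obtain ⟨xs, hxsK, hmax⟩ := hKc.exists_isMaxOn hKne
    ((continuous_abs.comp (MvPolynomial.continuous_eval q)).continuousOn)
  set M := |eval xs q| with hMdef
  have hM0 : 0 ≤ M := abs_nonneg _
  have hM : ∀ y ∈ Cube (0 : Fin d → ℝ) 1, |eval y q| ≤ M := fun y hy => hmax hy
  set u : Fin d → ℝ := fun i => min (xs i) (1 - c) with hu
  have hxsi : ∀ i, 0 ≤ xs i ∧ xs i ≤ 1 := by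
    intro i; have := hxsK i; simpa using this
  have huI : ∀ i, 0 ≤ u i ∧ u i + c ≤ 1 := by
    intro i
    constructor
    · exact le_min (hxsi i).1 (by linarith)
    · have : u i ≤ 1 - c := min_le_right _ _
      linarith
  refine ⟨u, huI, M, hM0, ?_⟩
  have hxsmem : xs ∈ Cube u c := by
    intro i
    constructor
    · exact min_le_left _ _
    · rcases le_total (xs i) (1 - c) with h | h
      · simp [hu, min_eq_left h]; linarith [hc0]
      · simp [hu, min_eq_right h]; linarith [(hxsi i).2]
  have hsub : Cube u c ⊆ Cube (0 : Fin d → ℝ) 1 := by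
    intro t ht i
    have h1 := (ht i).1; have h2 := (ht i).2
    have := huI i
    simp only [Pi.zero_apply, Set.mem_Icc, zero_add]
    constructor <;> linarith
  intro t ht
  have htK := hsub ht
  have hB : ∀ i : Fin d, ∀ w ∈ Cube (0:Fin d→ℝ) 1, |eval w (pderiv i q)| ≤ C * M :=
    fun i w hw => hC q hq M hM i w hw
  have hyz : ∀ i, |t i - xs i| ≤ c := by
    intro i
    have h1 := (ht i).1; have h2 := (ht i).2
    have h3 := (hxsmem i).1; have h4 := (hxsmem i).2
    rw [abs_le]; constructor <;> linarith
  have hdiff := telescope q hc0.le hB hxsK htK hyz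
  have hkey : (d:ℝ) * C * c ≤ 1/2 := by
    rw [hc, mul_one_div, div_le_div_iff₀ hden (by norm_num : (0:ℝ) < 2)]
    ring_nf; nlinarith
  have hhalf : (d:ℝ) * (C * M * c) ≤ M / 2 := by nlinarith
  have habs : M - |eval t q| ≤ |eval t q - eval xs q| := by
    have h1 : |eval xs q| - |eval t q| ≤ |eval xs q - eval t q| := abs_sub_abs_le_abs_sub _ _
    rw [abs_sub_comm] at h1
    linarith
  constructor
  · have : |eval t q - eval xs q| ≤ (d:ℝ) * (C * M * c) := by
      calc |eval t q - eval xs q| ≤ d * ((C*M) * c) := hdiff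
        _ = (d:ℝ) * (C * M * c) := by ring
    linarith
  · exact hM t htK

lemma eval_affine {d : ℕ} (q : MvPolynomial (Fin d) ℝ) (x : Fin d → ℝ) (ℓ : ℝ)
    (t : Fin d → ℝ) :
    eval t (aeval (fun i => C (x i) + C ℓ * X i : Fin d → MvPolynomial (Fin d) ℝ) q)
      = eval (fun i => x i + ℓ * t i) q := by
  induction q using MvPolynomial.induction_on with
  | C a => simp
  | add p r hp hr => simp only [map_add, eval_add]; rw [hp, hr]
  | mul_X p i hp =>
    simp only [map_mul, map_add, aeval_X, eval_mul, eval_add, eval_C, eval_X]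
    rw [hp]

lemma totalDegree_affine_le {d : ℕ} (q : MvPolynomial (Fin d) ℝ) (x : Fin d → ℝ) (ℓ : ℝ) :
    (aeval (fun i => C (x i) + C ℓ * X i : Fin d → MvPolynomial (Fin d) ℝ) q).totalDegree
      ≤ q.totalDegree := by
  set f : Fin d → MvPolynomial (Fin d) ℝ := fun i => C (x i) + C ℓ * X i with hf
  have hf1 : ∀ i, (f i).totalDegree ≤ 1 := by
    intro i
    refine le_trans (totalDegree_add _ _) (max_le ?_ ?_)
    · simp [totalDegree_C]
    · refine le_trans (totalDegree_mul _ _) ?_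
      simp [totalDegree_C, totalDegree_X]
  conv_lhs => rw [q.as_sum]
  rw [map_sum]
  refine le_trans (totalDegree_finset_sum _ _) (Finset.sup_le ?_)
  intro m hm
  rw [aeval_monomial]
  refine le_trans (totalDegree_mul _ _) ?_
  have h1 : (algebraMap ℝ (MvPolynomial (Fin d) ℝ) (coeff m q)).totalDegree = 0 := by
    simp [algebraMap_eq, totalDegree_C]
  rw [h1, zero_add]
  have h2 : (m.prod fun n e => f n ^ e).totalDegree ≤ m.sum fun _ e => e := by
    rw [Finsupp.prod]
    refine le_trans (totalDegree_finset_prod _ _) ?_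
    rw [Finsupp.sum]
    refine Finset.sum_le_sum ?_
    intro i _
    refine le_trans (totalDegree_pow _ _) ?_
    calc m i * (f i).totalDegree ≤ m i * 1 := Nat.mul_le_mul_left _ (hf1 i)
      _ = m i := Nat.mul_one _
  exact le_trans h2 (le_totalDegree hm)

/-- For every `d, D ∈ ℕ` there is `c > 0` such that for every polynomial `q` in `d` real
variables of degree `≤ D` and every cube `Q`, there is a subcube `Q' ⊆ Q` of side length
`c·ℓ_Q` with `sup_{Q'} |q| ≤ 2 · inf_{Q'} |q|`. -/
theorem stmt_11 (d D : ℕ) :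
    ∃ c > (0 : ℝ), ∀ q : MvPolynomial (Fin d) ℝ, q.totalDegree ≤ D →
      ∀ (x : Fin d → ℝ) (ℓ : ℝ), 0 < ℓ →
        ∃ x' : Fin d → ℝ, Cube x' (c * ℓ) ⊆ Cube x ℓ ∧
          sSup ((fun y => |MvPolynomial.eval y q|) '' Cube x' (c * ℓ)) ≤
            2 * sInf ((fun y => |MvPolynomial.eval y q|) '' Cube x' (c * ℓ)) := by
  obtain ⟨c, hc0, hc1, hmain⟩ := unit_cube_lemma d D
  refine ⟨c, hc0, ?_⟩
  intro q hq x ℓ hl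
  set qA := aeval (fun i => C (x i) + C ℓ * X i : Fin d → MvPolynomial (Fin d) ℝ) q with hqA
  have hqAdeg : qA.totalDegree ≤ D := le_trans (totalDegree_affine_le q x ℓ) hq
  obtain ⟨u, hu, M, hM0, hbound⟩ := hmain qA hqAdeg
  set x' : Fin d → ℝ := fun i => x i + ℓ * u i with hx'
  refine ⟨x', ?_, ?_⟩
  · intro y hy i
    have h1 := (hy i).1
    have h2 := (hy i).2
    have h3 := (hu i).1
    have h4 := (hu i).2
    simp only [hx'] at h1 h2
    constructor
    · nlinarith
    · nlinarith
  · set S := (fun y => |eval y q|) '' Cube x' (c * ℓ) with hS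
    have hkey : ∀ v ∈ S, M/2 ≤ v ∧ v ≤ M := by
      rintro v ⟨y, hy, rfl⟩
      set t : Fin d → ℝ := fun i => (y i - x i)/ℓ with htdef
      have htmem : t ∈ Cube u c := by
        intro i
        have h1 := (hy i).1
        have h2 := (hy i).2
        simp only [hx'] at h1 h2
        constructor
        · rw [le_div_iff₀ hl]; nlinarith
        · rw [div_le_iff₀ hl]; nlinarith
      have hyt : (fun i => x i + ℓ * t i) = y := funext fun i => by
        simp only [htdef]; field_simp; ring
      have heval : eval y q = eval t qA := by
        rw [hqA, eval_affine, hyt]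
      show M / 2 ≤ |eval y q| ∧ |eval y q| ≤ M
      rw [heval]
      exact hbound t htmem
    have hSne : S.Nonempty := by
      refine ⟨|eval x' q|, x', ?_, rfl⟩
      intro i
      constructor
      · exact le_refl _
      · nlinarith [mul_pos hc0 hl]
    have hsup : sSup S ≤ M := Real.sSup_le (fun v hv => (hkey v hv).2) hM0
    have hinf : M/2 ≤ sInf S := le_csInf hSne (fun v hv => (hkey v hv).1)
    linarith
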